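/- Let γ = (γ_n)_{n∈ℤ₊} be a real sequence satisfying γ_{n+1} = Σ_{j=0}^{r-1} a_j γ_{n-j} for all n ≥ r-1, with a_{r-1} ≠ 0. For n, k ∈ ℤ₊ let M_n(k) denote the (n+1)×(n+1) Hankel matrix with entries (M_n(k))_{ij} = γ_{k+i+j}. If M_{r-1}(2n_0) is positive semidefinite for some integer n_0 ≥ 1, then M_r(2n_0 − 2) is positive semidefinite. -/

import Mathlib

open Polynomial

/-- The linear functional on polynomials sending `X^n` to `γ n`. -/
noncomputable def lamL (γ : ℕ → ℝ) : Polynomial ℝ →ₗ[ℝ] ℝ :=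
  (Finsupp.linearCombination ℝ γ) ∘ₗ (AddMonoidAlgebra.coeffLinearEquiv ℝ).toLinearMap ∘ₗ (Polynomial.toFinsuppIsoAlg ℝ).toLinearEquiv.toLinearMap

theorem lam_CX (γ : ℕ → ℝ) (c : ℝ) (n : ℕ) : lamL γ (C c * X^n) = c * γ n := by
  have h : (Polynomial.toFinsuppIsoAlg ℝ).toLinearEquiv.toLinearMap (C c * X^n)
      = AddMonoidAlgebra.single n c := by
    show (C c * X^n).toFinsupp = _
    simp [C_mul_X_pow_eq_monomial, toFinsupp_monomial]
  simp only [lamL, LinearMap.comp_apply]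
  erw [h]
  show Finsupp.linearCombination ℝ γ (Finsupp.single n c) = _
  simp

theorem lam_expand (γ : ℕ → ℝ) (e N : ℕ) (w : Fin N → ℝ) :
    lamL γ (X^e * (∑ i : Fin N, C (w i) * X^(i:ℕ))^2)
      = ∑ i : Fin N, ∑ j : Fin N, w i * w j * γ (e + (i:ℕ) + (j:ℕ)) := by
  rw [sq, Finset.sum_mul_sum, Finset.mul_sum, map_sum]
  refine Finset.sum_congr rfl fun i _ => ?_
  rw [Finset.mul_sum, map_sum]
  refine Finset.sum_congr rfl fun j _ => ?_
  rw [show (X:ℝ[X])^e * (C (w i) * X^(i:ℕ) * (C (w j) * X^(j:ℕ)))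
      = C (w i * w j) * X^(e+(i:ℕ)+(j:ℕ)) by rw [C_mul, pow_add, pow_add]; ring]
  rw [lam_CX]

/-- Let `γ` be a real sequence with `γ_{n+1} = Σ_{j=0}^{r-1} a_j γ_{n-j}`
for all `n ≥ r-1` and `a_{r-1} ≠ 0`.  Let `M_n(k)` be the `(n+1)×(n+1)` Hankel matrix with
entries `γ_{k+i+j}`.  If `M_{r-1}(2n_0)` is positive semidefinite for some `n_0 ≥ 1`,
then `M_r(2n_0 − 2)` is positive semidefinite. -/
theorem stmt_10 (r : ℕ) (hr : 0 < r) (γ : ℕ → ℝ) (a : Fin r → ℝ)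
    (ha : a ⟨r - 1, by omega⟩ ≠ 0)
    (hrec : ∀ n : ℕ, r - 1 ≤ n → γ (n + 1) = ∑ j : Fin r, a j * γ (n - (j : ℕ)))
    (n0 : ℕ) (hn0 : 1 ≤ n0)
    (hpsd : (Matrix.of fun i j : Fin (r - 1 + 1) =>
        γ (2 * n0 + (i : ℕ) + (j : ℕ))).PosSemidef) :
    (Matrix.of fun i j : Fin (r + 1) => γ (2 * n0 - 2 + (i : ℕ) + (j : ℕ))).PosSemidef := by
  obtain ⟨m, rfl⟩ : ∃ m, r = m + 1 := ⟨r - 1, by omega⟩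
  obtain ⟨k, rfl⟩ : ∃ k, n0 = k + 1 := ⟨n0 - 1, by omega⟩
  have ha' : a (Fin.last m) ≠ 0 := ha
  set aL : ℝ := a (Fin.last m) with haL
  -- the characteristic polynomial of the recursion
  set q : ℝ[X] := X^(m+1) - ∑ j : Fin (m+1), C (a j) * X^(m - (j:ℕ)) with hq
  -- lamL kills multiples of q
  have hq0 : ∀ g : ℝ[X], lamL γ (q * g) = 0 := by
    intro g
    induction g using Polynomial.induction_on' with
    | add f g hf hg => rw [mul_add, map_add, hf, hg, add_zero]
    | monomial n c =>
      have hexp : q * monomial n c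
          = C c * X^(n+(m+1)) - ∑ j : Fin (m+1), C (c * a j) * X^(n + (m - (j:ℕ))) := by
        rw [hq, ← C_mul_X_pow_eq_monomial, sub_mul, Finset.sum_mul]
        congr 1
        · rw [pow_add]; ring
        · refine Finset.sum_congr rfl fun j _ => ?_
          rw [C_mul, pow_add]; ring
      rw [hexp, map_sub, map_sum, lam_CX]
      have hterm : ∀ j : Fin (m+1),
          lamL γ (C (c * a j) * X^(n + (m - (j:ℕ)))) = c * (a j * γ (n + m - (j:ℕ))) := by
        intro j
        rw [lam_CX, show n + (m - (j:ℕ)) = n + m - (j:ℕ) by omega]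
        ring
      rw [Finset.sum_congr rfl fun j _ => hterm j, ← Finset.mul_sum,
        ← hrec (n+m) (by omega), show n + (m+1) = n + m + 1 by omega, sub_self]
  -- q is monic of degree m+1
  have hSdeg : (∑ j : Fin (m+1), C (a j) * X^(m - (j:ℕ))).degree ≤ (m : WithBot ℕ) := by
    refine (Polynomial.degree_sum_le _ _).trans ?_
    refine Finset.sup_le fun j _ => ?_
    refine (Polynomial.degree_C_mul_X_pow_le _ _).trans ?_
    exact_mod_cast Nat.sub_le m _
  have hqmonic : q.Monic := by
    rw [hq]
    exact Polynomial.monic_X_pow_sub (hSdeg.trans_lt (by exact_mod_cast Nat.lt_succ_self m))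
  have hqdeg : q.degree = (m+1 : ℕ) := by
    rw [hq]
    rw [Polynomial.degree_sub_eq_left_of_degree_lt]
    · exact Polynomial.degree_X_pow _
    · rw [Polynomial.degree_X_pow]
      exact lt_of_le_of_lt hSdeg (by exact_mod_cast Nat.lt_succ_self m)
  -- the "inverse shift" polynomial d
  set d : ℝ[X] := C aL⁻¹ * (X^m - ∑ j : Fin m, C (a j.castSucc) * X^(m - 1 - (j:ℕ))) with hd
  have hXd : X * d = C aL⁻¹ * q + 1 := by
    have hsum : ∀ j : Fin m,
        (X:ℝ[X]) * (C (a j.castSucc) * X^(m-1-(j:ℕ))) = C (a j.castSucc) * X^(m-(j:ℕ)) := by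
      intro j
      rw [show m - (j:ℕ) = (m-1-(j:ℕ))+1 by omega]
      ring
    have h1 : ∑ j : Fin (m+1), C (a j) * X^(m-(j:ℕ))
        = (∑ j : Fin m, C (a j.castSucc) * X^(m-(j:ℕ))) + C aL := by
      rw [Fin.sum_univ_castSucc]
      simp [haL]
    have h2 : X * (X^m - ∑ j : Fin m, C (a j.castSucc) * X^(m-1-(j:ℕ))) = q + C aL := by
      rw [mul_sub, Finset.mul_sum]
      rw [Finset.sum_congr rfl fun j _ => hsum j, hq, h1]
      ring
    calc X * d = C aL⁻¹ * (X * (X^m - ∑ j : Fin m, C (a j.castSucc) * X^(m-1-(j:ℕ)))) := by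
          rw [hd]; ring
      _ = C aL⁻¹ * (q + C aL) := by rw [h2]
      _ = C aL⁻¹ * q + 1 := by rw [mul_add, ← C_mul, inv_mul_cancel₀ ha', C_1]
  -- positive semidefiniteness
  rw [Matrix.posSemidef_iff_dotProduct_mulVec]
  constructor
  · -- Hermitian
    ext i j
    simp only [Matrix.conjTranspose_apply, Matrix.of_apply, star_trivial]
    congr 1
    omega
  · intro x
    set p : ℝ[X] := ∑ i : Fin (m+1+1), C (x i) * X^(i:ℕ) with hp
    set s : ℝ[X] := (p * d) /ₘ q with hs
    set ρ : ℝ[X] := (p * d) %ₘ q with hρdef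
    have hmod : ρ + q * s = p * d := Polynomial.modByMonic_add_div (p * d) q
    have hρ : ρ = p * d - q * s := by rw [← hmod]; ring
    have hρdeg : ρ.natDegree < m + 1 := by
      have := Polynomial.degree_modByMonic_lt (p * d) hqmonic
      rw [hqdeg] at this
      have h2 := Polynomial.degree_le_natDegree (p := ρ)
      by_cases h0 : ρ = 0
      · simp [h0]
      · rw [Polynomial.degree_eq_natDegree h0] at this
        exact_mod_cast this
    set y : Fin (m+1) → ℝ := fun i => ρ.coeff i with hy
    have hρsum : ρ = ∑ i : Fin (m+1), C (y i) * X^(i:ℕ) :=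
      calc ρ = ∑ i ∈ Finset.range (m+1), monomial i (ρ.coeff i) :=
            ρ.as_sum_range' (m+1) hρdeg
        _ = ∑ i : Fin (m+1), C (y i) * X^(i:ℕ) := by
            rw [← Fin.sum_univ_eq_sum_range (fun i => monomial i (ρ.coeff i)) (m+1)]
            exact Finset.sum_congr rfl fun i _ => (C_mul_X_pow_eq_monomial).symm
    -- key polynomial identity
    set G : ℝ[X] := 2 * X^(2*k) * (C aL⁻¹ * q + 1) * p * X * s - X^(2*k) * X^2 * q * s^2
      - X^(2*k) * p^2 * (C aL⁻¹^2 * q + 2 * C aL⁻¹) with hG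
    have key : X^(2*k) * p^2 = X^(2*k) * X^2 * ρ^2 + q * G := by
      rw [hρ, hG]
      linear_combination (-(X^(2*k))*p^2*(X*d + (C aL⁻¹*q + 1)) + 2*(X^(2*k))*p*X*q*s) * hXd
    -- compute the quadratic forms
    have hform1 : dotProduct (star x) ((Matrix.of fun i j : Fin (m+1+1) =>
        γ (2 * (k+1) - 2 + (i:ℕ) + (j:ℕ))).mulVec x)
        = lamL γ (X^(2*k) * p^2) := by
      rw [hp, lam_expand]
      simp only [dotProduct, Matrix.mulVec, Matrix.of_apply, star_trivial,
        Finset.mul_sum]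
      refine Finset.sum_congr rfl fun i _ => Finset.sum_congr rfl fun j _ => ?_
      rw [show 2 * (k+1) - 2 + (i:ℕ) + (j:ℕ) = 2*k + (i:ℕ) + (j:ℕ) by omega]
      ring
    have hform2 : lamL γ (X^(2*k+2) * ρ^2)
        = dotProduct (star y) ((Matrix.of fun i j : Fin (m+1) =>
          γ (2 * (k+1) + (i:ℕ) + (j:ℕ))).mulVec y) := by
      conv_lhs => rw [hρsum]
      rw [lam_expand]
      simp only [dotProduct, Matrix.mulVec, Matrix.of_apply, star_trivial,
        Finset.mul_sum]
      refine Finset.sum_congr rfl fun i _ => Finset.sum_congr rfl fun j _ => ?_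
      rw [show 2*k+2 + (i:ℕ) + (j:ℕ) = 2 * (k+1) + (i:ℕ) + (j:ℕ) by omega]
      ring
    rw [hform1, key, map_add, hq0, add_zero,
      show X^(2*k) * X^2 = (X:ℝ[X])^(2*k+2) by rw [pow_add]]
    rw [hform2]
    exact hpsd.dotProduct_mulVec_nonneg y
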